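/- For all integers a and b, not both zero, with d := gcd(a,b), there exist integers x and y such that a·x + b·y = d and max{|x|, |y|} ≤ max{|a|/d, |b|/d}. -/

import Mathlib

theorem stmt_1 (a b : ℤ) (hab : ¬(a = 0 ∧ b = 0)) :
    ∃ x y : ℤ, a * x + b * y = Int.gcd a b ∧
      max |x| |y| ≤ max (|a| / (Int.gcd a b : ℤ)) (|b| / (Int.gcd a b : ℤ)) := by
  set d : ℤ := (Int.gcd a b : ℤ) with hd
  have hd0 : 0 < d := by
    have h : 0 < Int.gcd a b :=
      Nat.pos_of_ne_zero (fun h => hab (Int.gcd_eq_zero_iff.mp h))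
    rw [hd]; exact_mod_cast h
  have hda : d ∣ a := Int.gcd_dvd_left a b
  have hdb : d ∣ b := Int.gcd_dvd_right a b
  by_cases hb : b = 0
  · have ha : a ≠ 0 := fun h => hab ⟨h, hb⟩
    have hdval : d = |a| := by
      rw [hd, hb, Int.gcd_zero_right]; exact (Int.abs_eq_natAbs a).symm
    refine ⟨a.sign, 0, ?_, ?_⟩
    · rw [hb, hdval, Int.abs_eq_natAbs]
      simpa using Int.mul_sign a
    · have h1 : |a.sign| = 1 := Int.abs_sign_of_ne_zero ha
      have h2 : |a| / d = 1 := by rw [hdval]; exact Int.ediv_self (by positivity)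
      simp [h1, h2]
  · -- b ≠ 0
    have hb' : (0:ℤ) < |b| := abs_pos.mpr hb
    obtain ⟨a', ha'⟩ := hda
    obtain ⟨b', hb2⟩ := hdb
    set m : ℤ := b / d with hm
    have hmb : m = b' := by rw [hm, hb2, Int.mul_ediv_cancel_left _ hd0.ne']
    have had : a / d = a' := by rw [ha', Int.mul_ediv_cancel_left _ hd0.ne']
    have hm0 : m ≠ 0 := by
      intro h
      apply hb
      rw [hb2, hmb.symm.trans h, mul_zero]
    set u : ℤ := Int.gcdA a b with hu
    set v : ℤ := Int.gcdB a b with hv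
    have hbezout : a * u + b * v = d := (Int.gcd_eq_gcd_ab a b).symm
    set x : ℤ := u % m with hx
    have hx0 : 0 ≤ x := Int.emod_nonneg u hm0
    have hxlt : x < |m| := Int.emod_lt_abs u hm0
    have hmdvd : m ∣ u - x := Dvd.intro (u / m) (by rw [hx, Int.emod_def]; ring)
    set t : ℤ := (u - x) / m with ht
    have htm : m * t = u - x := Int.mul_ediv_cancel' hmdvd
    set y : ℤ := v + t * (a / d) with hy
    have heq : a * x + b * y = d := by
      have hba : b * (a / d) = m * a := by
        rw [had, hmb, ha', hb2]; ring
      have h2 : a * x + b * y = a * u + b * v - a * (m * t) + (b * (a/d)) * t := by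
        rw [hy, htm]; ring
      rw [h2, hba, hbezout]; ring
    refine ⟨x, y, heq, ?_⟩
    set A : ℤ := |a| / d with hA
    set B : ℤ := |b| / d with hB
    have hdabs_a : d ∣ |a| := (dvd_abs d a).mpr ⟨a', ha'⟩
    have hdabs_b : d ∣ |b| := (dvd_abs d b).mpr ⟨b', hb2⟩
    have hAd : A * d = |a| := Int.ediv_mul_cancel hdabs_a
    have hBd : B * d = |b| := Int.ediv_mul_cancel hdabs_b
    have hmB : |m| = B := by
      have h1 : |m| * d = |b| := by
        rw [← abs_of_pos hd0, ← abs_mul, hm, Int.ediv_mul_cancel ⟨b', hb2⟩]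
      exact mul_right_cancel₀ hd0.ne' (h1.trans hBd.symm)
    have hby : b * y = d - a * x := by linarith [heq]
    have h1 : |b| * |y| ≤ d + |a| * x := by
      calc |b| * |y| = |b * y| := (abs_mul b y).symm
      _ = |d - a * x| := by rw [hby]
      _ ≤ |d| + |a * x| := abs_sub _ _
      _ = d + |a| * x := by rw [abs_of_pos hd0, abs_mul, abs_of_nonneg hx0]
    have hA0 : 0 ≤ A := Int.ediv_nonneg (abs_nonneg a) hd0.le
    clear_value y
    clear_value t
    clear_value x
    clear_value B
    clear_value A
    clear_value v
    clear_value u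
    clear_value m
    clear_value d
    subst hmB
    have hB1 : 1 ≤ |m| := by omega
    have hxM : |x| ≤ max A |m| := by
      rw [abs_of_nonneg hx0]
      exact le_trans (by omega : x ≤ |m|) (le_max_right _ _)
    have key : |b| * |y| ≤ |b| * max A |m| := by
      have hM1 : A ≤ max A |m| := le_max_left _ _
      have hM2 : |m| ≤ max A |m| := le_max_right _ _
      have hax : |a| * x ≤ (A * d) * (|m| - 1) := by
        rw [hAd]
        exact mul_le_mul_of_nonneg_left (by omega) (abs_nonneg a)
      by_cases ha0 : a = 0
      · have hA' : A = 0 := by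
          have h0 : A * d = 0 := by rw [hAd, ha0, abs_zero]
          exact (mul_eq_zero.mp h0).resolve_right hd0.ne'
        have hax0 : |a| * x ≤ 0 := by rw [hA'] at hax; simpa using hax
        have e1 : d ≤ |m| * d := le_mul_of_one_le_left hd0.le hB1
        have e1' : d ≤ |b| := hBd ▸ e1
        have e2 : |b| ≤ |b| * |m| := le_mul_of_one_le_right hb'.le hB1
        have e3 : |b| * |m| ≤ |b| * max A |m| :=
          mul_le_mul_of_nonneg_left hM2 hb'.le
        linarith
      · have hda' : d ≤ A * d := by
          rw [hAd]; exact Int.le_of_dvd (abs_pos.mpr ha0) hdabs_a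
        have e1 : (A * d) * (|m| - 1) = |b| * A - A * d := by
          rw [← hBd]; ring
        have e4 : |b| * A ≤ |b| * max A |m| :=
          mul_le_mul_of_nonneg_left hM1 hb'.le
        linarith
    exact max_le hxM (le_of_mul_le_mul_left key hb')
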